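/- Let k be a field and let r ≥ 1 and N ≥ 0 be integers. Then the functor from commutative k-algebras to sets given by R ↦ { (A, B) : A, B are r×r matrices over R((t)) with AB = BA = Id and every entry of A and of B lies in t^{−N}·R[[t]] }, with functoriality induced by applying a ring homomorphism R → R' coefficientwise to Laurent series, is corepresentable by a commutative k-algebra. For N = 0 this functor is naturally isomorphic to R ↦ GL_r(R[[t]]), so in particular the functor R ↦ GL_r(R[[t]]) is corepresentable by a commutative k-algebra. -/

import Mathlib

/-- The functor (in `R`) of pairs `(A, B)` of `r × r` matrices over the Laurent series ring
`R((t))` with `A·B = B·A = 1` and all entries of `A` and `B` lying in `t^{-N}·R[[t]]`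
(equivalently, `t^N` times each entry lies in `R[[t]]`). -/
def glPairFunctor (r N : ℕ) (R : Type u) [CommRing R] : Type u :=
  { AB : Matrix (Fin r) (Fin r) (LaurentSeries R) × Matrix (Fin r) (Fin r) (LaurentSeries R) //
    AB.1 * AB.2 = 1 ∧ AB.2 * AB.1 = 1 ∧
    (∀ i j, HahnSeries.single (N : ℤ) (1 : R) * AB.1 i j ∈
      Set.range (HahnSeries.ofPowerSeries ℤ R)) ∧
    (∀ i j, HahnSeries.single (N : ℤ) (1 : R) * AB.2 i j ∈
      Set.range (HahnSeries.ofPowerSeries ℤ R)) }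

set_option maxHeartbeats 1000000
set_option synthInstance.maxHeartbeats 400000

noncomputable section
open HahnSeries

variable {R : Type*} [CommRing R] {R' : Type*} [CommRing R']

lemma ofPS_coeff_neg (p : PowerSeries R) {m : ℤ} (hm : m < 0) :
    (HahnSeries.ofPowerSeries ℤ R p).coeff m = 0 := by
  rw [HahnSeries.ofPowerSeries_apply]
  apply HahnSeries.embDomain_notin_range
  rintro ⟨n, rfl⟩
  simp at hm
  omega

lemma map_shift_ofPS (f : R →+* R') (a : ℤ) (p : PowerSeries R) :
    HahnSeries.map (HahnSeries.single a (1:R) * HahnSeries.ofPowerSeries ℤ R p) f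
      = HahnSeries.single a (1:R') * HahnSeries.ofPowerSeries ℤ R' (PowerSeries.map f p) := by
  ext m
  obtain ⟨b, rfl⟩ : ∃ b, m = b + a := ⟨m - a, by ring⟩
  rw [HahnSeries.map_coeff, HahnSeries.coeff_single_mul_add, HahnSeries.coeff_single_mul_add,
    one_mul, one_mul]
  rcases le_or_gt 0 b with h | h
  · obtain ⟨n, rfl⟩ := Int.eq_ofNat_of_zero_le h
    rw [HahnSeries.ofPowerSeries_apply_coeff, HahnSeries.ofPowerSeries_apply_coeff,
      PowerSeries.coeff_map]
  · rw [ofPS_coeff_neg _ h, ofPS_coeff_neg _ h, map_zero]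

/-- pairs of matrices over power series with product `X^{2N} · 1`. -/
def psPair (r N : ℕ) (R : Type u) [CommRing R] : Type u :=
  { PQ : Matrix (Fin r) (Fin r) (PowerSeries R) × Matrix (Fin r) (Fin r) (PowerSeries R) //
    PQ.1 * PQ.2 = (PowerSeries.X ^ (2*N) : PowerSeries R) • (1 : Matrix (Fin r) (Fin r) (PowerSeries R)) ∧
    PQ.2 * PQ.1 = (PowerSeries.X ^ (2*N) : PowerSeries R) • 1 }

variable {r N : ℕ}

/-- the underlying map from power-series matrices to Laurent matrices -/
def toLSmat (N : ℕ) (P : Matrix (Fin r) (Fin r) (PowerSeries R)) :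
    Matrix (Fin r) (Fin r) (LaurentSeries R) :=
  HahnSeries.single (-(N:ℤ)) (1:R) • P.map (HahnSeries.ofPowerSeries ℤ R)

lemma smul_map_mul (c d : LaurentSeries R) (P Q : Matrix (Fin r) (Fin r) (LaurentSeries R)) :
    (c • P) * (d • Q) = (c * d) • (P * Q) := by
  refine Matrix.ext fun i j => ?_
  simp only [Matrix.mul_apply, Matrix.smul_apply, smul_eq_mul, Finset.mul_sum]
  exact Finset.sum_congr rfl fun l _ => by ring

lemma mat_smul_smul (c d : LaurentSeries R) (M : Matrix (Fin r) (Fin r) (LaurentSeries R)) :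
    c • d • M = (c * d) • M := by
  refine Matrix.ext fun i j => ?_
  simp only [Matrix.smul_apply, smul_eq_mul, mul_assoc]

lemma map_smul_one (c : PowerSeries R) :
    (c • (1 : Matrix (Fin r) (Fin r) (PowerSeries R))).map (HahnSeries.ofPowerSeries ℤ R)
      = (HahnSeries.ofPowerSeries ℤ R c) • 1 := by
  ext i j
  simp [Matrix.map_apply, Matrix.smul_apply, Matrix.one_apply, apply_ite, mul_ite]

lemma single_neg_mul_single (a : ℤ) :
    (HahnSeries.single (-a) (1:R)) * HahnSeries.single a 1 = 1 := by
  rw [HahnSeries.single_mul_single, neg_add_cancel, one_mul, HahnSeries.single_zero_one]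

lemma toLSmat_mul (P Q : Matrix (Fin r) (Fin r) (PowerSeries R))
    (h : P * Q = (PowerSeries.X ^ (2*N) : PowerSeries R) • 1) :
    toLSmat N P * toLSmat N Q = 1 := by
  rw [toLSmat, toLSmat, smul_map_mul, ← Matrix.map_mul, h, map_smul_one,
    HahnSeries.ofPowerSeries_X_pow, mat_smul_smul, HahnSeries.single_mul_single,
    HahnSeries.single_mul_single,
    show (-(N:ℤ) + -(N:ℤ)) + ((2*N : ℕ) : ℤ) = 0 by push_cast; ring, mul_one, one_mul,
    HahnSeries.single_zero_one, one_smul]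

lemma toLSmat_mem (P : Matrix (Fin r) (Fin r) (PowerSeries R)) (i j : Fin r) :
    HahnSeries.single (N : ℤ) (1 : R) * toLSmat N P i j ∈
      Set.range (HahnSeries.ofPowerSeries ℤ R) := by
  refine ⟨P i j, ?_⟩
  rw [toLSmat, Matrix.smul_apply, Matrix.map_apply, smul_eq_mul, ← mul_assoc,
    HahnSeries.single_mul_single, one_mul, add_neg_cancel, HahnSeries.single_zero_one, one_mul]

/-- The map from power-series pairs to the functor of Laurent pairs. -/
def toLS (r N : ℕ) (R : Type u) [CommRing R] (x : psPair r N R) : glPairFunctor r N R :=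
  ⟨(toLSmat N x.1.1, toLSmat N x.1.2),
    toLSmat_mul _ _ x.2.1, toLSmat_mul _ _ x.2.2,
    toLSmat_mem _, toLSmat_mem _⟩

lemma matrix_map_injective {S S' : Type*} {f : S → S'} (hf : Function.Injective f)
    {P Q : Matrix (Fin r) (Fin r) S} (h : P.map f = Q.map f) : P = Q :=
  Matrix.ext fun i j => hf (congrArg (fun M => M i j) h)

lemma toLSmat_injective : Function.Injective (toLSmat (R := R) (r := r) N) := by
  intro P Q h
  refine Matrix.ext fun i j => HahnSeries.ofPowerSeries_injective (Γ := ℤ) (R := R) ?_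
  have := congrArg (fun M => HahnSeries.single (N:ℤ) (1:R) * M i j) h
  simpa only [toLSmat, Matrix.smul_apply, Matrix.map_apply, smul_eq_mul, ← mul_assoc,
    HahnSeries.single_mul_single, one_mul, add_neg_cancel, HahnSeries.single_zero_one] using this

lemma toLS_bijective : Function.Bijective (toLS r N R) := by
  constructor
  · rintro ⟨⟨P, Q⟩, _⟩ ⟨⟨P', Q'⟩, _⟩ h
    have h1 := congrArg (fun z => z.1.1) h
    have h2 := congrArg (fun z => z.1.2) h
    simp only [toLS] at h1 h2
    exact Subtype.ext (Prod.ext (toLSmat_injective h1) (toLSmat_injective h2))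
  · rintro ⟨⟨A, B⟩, hs⟩
    obtain ⟨h1, h2, h3, h4⟩ := id hs
    dsimp only at h1 h2 h3 h4
    choose P hP using h3
    choose Q hQ using h4
    have hA : A = toLSmat N (Matrix.of P) := by
      refine Matrix.ext fun i j => ?_
      rw [toLSmat, Matrix.smul_apply, Matrix.map_apply, Matrix.of_apply, smul_eq_mul, hP,
        ← mul_assoc, single_neg_mul_single, one_mul]
    have hB : B = toLSmat N (Matrix.of Q) := by
      refine Matrix.ext fun i j => ?_
      rw [toLSmat, Matrix.smul_apply, Matrix.map_apply, Matrix.of_apply, smul_eq_mul, hQ,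
        ← mul_assoc, single_neg_mul_single, one_mul]
    have key : ∀ P' Q' : Matrix (Fin r) (Fin r) (PowerSeries R),
        toLSmat N P' * toLSmat N Q' = 1 →
        P' * Q' = (PowerSeries.X ^ (2*N) : PowerSeries R) • 1 := by
      intro P' Q' hPQ
      rw [toLSmat, toLSmat, smul_map_mul, ← Matrix.map_mul, HahnSeries.single_mul_single] at hPQ
      apply matrix_map_injective (HahnSeries.ofPowerSeries_injective (Γ := ℤ) (R := R))
      rw [map_smul_one, HahnSeries.ofPowerSeries_X_pow]
      have h5 := congrArg (fun M => (HahnSeries.single ((N:ℤ) + N) (1:R)) • M) hPQ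
      rw [mat_smul_smul, HahnSeries.single_mul_single,
        show ((N:ℤ) + N) + (-(N:ℤ) + -(N:ℤ)) = 0 by ring, one_mul, one_mul,
        HahnSeries.single_zero_one, one_smul] at h5
      rw [h5, show ((2*N : ℕ) : ℤ) = (N:ℤ) + N by push_cast; ring]
    refine ⟨⟨(Matrix.of P, Matrix.of Q), ?_, ?_⟩, ?_⟩
    · exact key _ _ (by rw [← hA, ← hB]; exact h1)
    · exact key _ _ (by rw [← hB, ← hA]; exact h2)
    · exact Subtype.ext (Prod.ext hA.symm hB.symm)

/-- The equivalence from power-series pairs to the functor of Laurent pairs. -/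
def E1 (r N : ℕ) (R : Type u) [CommRing R] : psPair r N R ≃ glPairFunctor r N R :=
  Equiv.ofBijective _ toLS_bijective

lemma E1_fst (x : psPair r N R) : (E1 r N R x).1.1 = toLSmat N x.1.1 := rfl
lemma E1_snd (x : psPair r N R) : (E1 r N R x).1.2 = toLSmat N x.1.2 := rfl

lemma toLSmat_map (f : R →+* R') (P : Matrix (Fin r) (Fin r) (PowerSeries R)) :
    toLSmat N (P.map (PowerSeries.map f)) =
      (toLSmat N P).map (fun x => HahnSeries.map x f) := by
  refine Matrix.ext fun i j => ?_
  simp only [toLSmat, Matrix.map_apply, Matrix.smul_apply, smul_eq_mul]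
  exact (map_shift_ofPS f _ _).symm

section Corep

variable (k : Type u) [CommRing k]

/-- index type for coefficients -/
abbrev PIdx (r : ℕ) : Type := Bool × Fin r × Fin r × ℕ

variable (r N : ℕ)

/-- universal matrices -/
def univMat (b : Bool) : Matrix (Fin r) (Fin r) (PowerSeries (MvPolynomial (PIdx r) k)) :=
  Matrix.of fun i j => PowerSeries.mk fun n => MvPolynomial.X (b, i, j, n)

/-- universal relation matrix -/
def relMat (b c : Bool) : Matrix (Fin r) (Fin r) (PowerSeries (MvPolynomial (PIdx r) k)) :=
  univMat k r b * univMat k r c -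
    (PowerSeries.X ^ (2*N) : PowerSeries (MvPolynomial (PIdx r) k)) • 1

/-- the set of relations -/
def relSet : Set (MvPolynomial (PIdx r) k) :=
  {p | ∃ i j m, p = PowerSeries.coeff m (relMat k r N false true i j)} ∪
  {p | ∃ i j m, p = PowerSeries.coeff m (relMat k r N true false i j)}

def relIdeal : Ideal (MvPolynomial (PIdx r) k) := Ideal.span (relSet k r N)

/-- the corepresenting algebra -/
def Corep : Type u := MvPolynomial (PIdx r) k ⧸ relIdeal k r N

instance : CommRing (Corep k r N) := Ideal.Quotient.commRing _
instance : Algebra k (Corep k r N) := Ideal.Quotient.algebra k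

variable {r N}
variable {S : Type u} [CommRing S] [Algebra k S]

/-- matrices from a coefficient family -/
def xMat (x : PIdx r → S) (b : Bool) : Matrix (Fin r) (Fin r) (PowerSeries S) :=
  Matrix.of fun i j => PowerSeries.mk fun n => x (b, i, j, n)

lemma univMat_map (x : PIdx r → S) (b : Bool) :
    (univMat k r b).map (PowerSeries.map (MvPolynomial.aeval x).toRingHom) = xMat x b := by
  refine Matrix.ext fun i j => PowerSeries.ext fun n => ?_
  simp [univMat, xMat, Matrix.map_apply, PowerSeries.coeff_map, PowerSeries.coeff_mk,
    MvPolynomial.aeval_X]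

lemma map_smul_one' (f : S →+* R) (c : PowerSeries S) :
    ((c • (1 : Matrix (Fin r) (Fin r) (PowerSeries S))).map (PowerSeries.map f))
      = (PowerSeries.map f c) • 1 := by
  refine Matrix.ext fun i j => ?_
  by_cases h : i = j <;> simp [Matrix.map_apply, Matrix.smul_apply, Matrix.one_apply, h]

lemma rel_iff (x : PIdx r → S) :
    (∀ p ∈ relSet k r N, MvPolynomial.aeval x p = 0) ↔
      (xMat x false * xMat x true = (PowerSeries.X ^ (2*N) : PowerSeries S) • 1 ∧
       xMat x true * xMat x false = (PowerSeries.X ^ (2*N) : PowerSeries S) • 1) := by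
  have key : ∀ b c : Bool,
      (∀ i j (m : ℕ), MvPolynomial.aeval x (PowerSeries.coeff m
        (relMat k r N b c i j)) = 0) ↔
      xMat x b * xMat x c = (PowerSeries.X ^ (2*N) : PowerSeries S) • 1 := by
    intro b c
    have hmap : (relMat k r N b c).map
        (PowerSeries.map (MvPolynomial.aeval x).toRingHom)
        = xMat x b * xMat x c - (PowerSeries.X ^ (2*N) : PowerSeries S) • 1 := by
      have h1 := map_sub (RingHom.mapMatrix (m := Fin r)
        (PowerSeries.map (MvPolynomial.aeval x).toRingHom))
        (univMat k r b * univMat k r c)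
        ((PowerSeries.X ^ (2*N) : PowerSeries (MvPolynomial (PIdx r) k)) • 1)
      have h2 := map_mul (RingHom.mapMatrix (m := Fin r)
        (PowerSeries.map (MvPolynomial.aeval x).toRingHom))
        (univMat k r b) (univMat k r c)
      simp only [RingHom.mapMatrix_apply] at h1 h2
      rw [relMat, h1, h2, univMat_map, univMat_map, map_smul_one', map_pow, PowerSeries.map_X]
    constructor
    · intro h
      have : ∀ i j, (relMat k r N b c).map
          (PowerSeries.map (MvPolynomial.aeval x).toRingHom) i j = 0 := by
        intro i j
        refine PowerSeries.ext fun m => ?_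
        rw [Matrix.map_apply, PowerSeries.coeff_map]
        simpa using h i j m
      have hz : xMat x b * xMat x c - (PowerSeries.X ^ (2*N) : PowerSeries S) • 1 = 0 := by
        rw [← hmap]; exact Matrix.ext this
      exact sub_eq_zero.mp hz
    · intro h i j m
      have hz : (relMat k r N b c).map
          (PowerSeries.map (MvPolynomial.aeval x).toRingHom) = 0 := by
        rw [hmap, h, sub_self]
      have := congrArg (fun M => PowerSeries.coeff m (M i j)) hz
      simpa [Matrix.map_apply, PowerSeries.coeff_map] using this
  constructor
  · intro h
    refine ⟨(key false true).mp ?_, (key true false).mp ?_⟩ <;>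
      exact fun i j m => h _ (by first
        | exact Or.inl ⟨i, j, m, rfl⟩
        | exact Or.inr ⟨i, j, m, rfl⟩)
  · rintro ⟨hl, hr⟩ p hp
    rcases hp with ⟨i, j, m, rfl⟩ | ⟨i, j, m, rfl⟩
    · exact (key false true).mpr hl i j m
    · exact (key true false).mpr hr i j m

end Corep

section Equiv0

variable (k : Type u) [CommRing k] {r N : ℕ} {S : Type u} [CommRing S] [Algebra k S]
variable {S' : Type u} [CommRing S'] [Algebra k S']

def xof (g : Corep k r N →ₐ[k] S) : PIdx r → S :=
  fun q => g (Ideal.Quotient.mkₐ k (relIdeal k r N) (MvPolynomial.X q))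

lemma aeval_xof (g : Corep k r N →ₐ[k] S) :
    MvPolynomial.aeval (xof k g) = g.comp (Ideal.Quotient.mkₐ k (relIdeal k r N)) := by
  apply MvPolynomial.algHom_ext
  intro q
  simp only [xof, MvPolynomial.aeval_X, AlgHom.comp_apply]
  rfl

lemma xof_rel (g : Corep k r N →ₐ[k] S) :
    ∀ p ∈ relSet k r N, MvPolynomial.aeval (xof k g) p = 0 := by
  intro p hp
  rw [aeval_xof]
  show g (Ideal.Quotient.mk (relIdeal k r N) p) = 0
  rw [Ideal.Quotient.eq_zero_iff_mem.mpr (show p ∈ relIdeal k r N from Ideal.subset_span hp)]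
  exact map_zero g

def xfrom (p : psPair r N S) : PIdx r → S := fun q =>
  PowerSeries.coeff q.2.2.2 ((bif q.1 then p.1.2 else p.1.1) q.2.1 q.2.2.1)

lemma xMat_xfrom_false (p : psPair r N S) : xMat (xfrom p) false = p.1.1 := by
  refine Matrix.ext fun i j => PowerSeries.ext fun n => ?_
  simp [xMat, xfrom, PowerSeries.coeff_mk]

lemma xMat_xfrom_true (p : psPair r N S) : xMat (xfrom p) true = p.1.2 := by
  refine Matrix.ext fun i j => PowerSeries.ext fun n => ?_
  simp [xMat, xfrom, PowerSeries.coeff_mk]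

lemma xfrom_rel (p : psPair r N S) :
    ∀ a ∈ relIdeal k r N, MvPolynomial.aeval (R := k) (xfrom p) a = 0 := by
  have hle : relIdeal k r N ≤
      RingHom.ker (MvPolynomial.aeval (R := k) (xfrom p)).toRingHom := by
    rw [relIdeal, Ideal.span_le]
    intro q hq
    have := (rel_iff k (xfrom p)).mpr
      ⟨by rw [xMat_xfrom_false, xMat_xfrom_true]; exact p.2.1,
       by rw [xMat_xfrom_false, xMat_xfrom_true]; exact p.2.2⟩ q hq
    exact this
  exact fun a ha => hle ha

def e0 : (Corep k r N →ₐ[k] S) ≃ psPair r N S where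
  toFun g := ⟨(xMat (xof k g) false, xMat (xof k g) true),
    (rel_iff k (xof k g)).mp (xof_rel k g)⟩
  invFun p := Ideal.Quotient.liftₐ _ (MvPolynomial.aeval (xfrom p)) (xfrom_rel k p)
  left_inv g := by
    apply Ideal.Quotient.algHom_ext
    rw [Ideal.Quotient.liftₐ_comp]
    have hx : xfrom (⟨(xMat (xof k g) false, xMat (xof k g) true),
        (rel_iff k (xof k g)).mp (xof_rel k g)⟩ : psPair r N S) = xof k g := by
      funext q
      obtain ⟨b, i, j, n⟩ := q
      cases b <;> simp [xfrom, xMat, PowerSeries.coeff_mk]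
    rw [hx, aeval_xof]
    rfl
  right_inv p := by
    have hx : xof k (Ideal.Quotient.liftₐ _ (MvPolynomial.aeval (xfrom p)) (xfrom_rel k p))
        = xfrom p := by
      funext q
      exact (AlgHom.congr_fun (Ideal.Quotient.liftₐ_comp (relIdeal k r N)
        (MvPolynomial.aeval (xfrom p)) (xfrom_rel k p)) (MvPolynomial.X q)).trans
        (MvPolynomial.aeval_X _ q)
    refine Subtype.ext (Prod.ext ?_ ?_)
    · show xMat _ false = p.1.1
      rw [hx, xMat_xfrom_false]
    · show xMat _ true = p.1.2
      rw [hx, xMat_xfrom_true]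

/-- the full equivalence -/
def eFull : (Corep k r N →ₐ[k] S) ≃ glPairFunctor r N S :=
  (e0 k).trans (E1 r N S)

lemma eFull_fst (g : Corep k r N →ₐ[k] S) :
    (eFull k g).1.1 = toLSmat N (xMat (xof k g) false) := rfl

lemma eFull_snd (g : Corep k r N →ₐ[k] S) :
    (eFull k g).1.2 = toLSmat N (xMat (xof k g) true) := rfl

lemma xMat_comp (f : S →+* S') (x : PIdx r → S) (b : Bool) :
    xMat (fun q => f (x q)) b = (xMat x b).map (PowerSeries.map f) := by
  refine Matrix.ext fun i j => PowerSeries.ext fun n => ?_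
  simp [xMat, Matrix.map_apply, PowerSeries.coeff_map, PowerSeries.coeff_mk]

lemma eFull_natural (f : S →ₐ[k] S') (g : Corep k r N →ₐ[k] S) :
    ((eFull k (f.comp g)).1.1 =
      (eFull k g).1.1.map (fun x => HahnSeries.map x f.toRingHom)) ∧
    ((eFull k (f.comp g)).1.2 =
      (eFull k g).1.2.map (fun x => HahnSeries.map x f.toRingHom)) := by
  have hx : xof k (f.comp g) = fun q => f.toRingHom (xof k g q) := rfl
  constructor
  · rw [eFull_fst, eFull_fst, hx, xMat_comp f.toRingHom, toLSmat_map]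
  · rw [eFull_snd, eFull_snd, hx, xMat_comp f.toRingHom, toLSmat_map]

end Equiv0

section GLpart

variable {r : ℕ} {S : Type u} [CommRing S] {S' : Type u} [CommRing S']

lemma xpow_zero_smul_one :
    (PowerSeries.X ^ (2*0) : PowerSeries S) • (1 : Matrix (Fin r) (Fin r) (PowerSeries S))
      = 1 := by
  norm_num

def uAux (S : Type u) [CommRing S] :
    psPair r 0 S ≃ (Matrix (Fin r) (Fin r) (PowerSeries S))ˣ where
  toFun p := ⟨p.1.1, p.1.2, by rw [p.2.1, xpow_zero_smul_one], by rw [p.2.2, xpow_zero_smul_one]⟩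
  invFun M := ⟨(M.val, M.inv), by rw [M.val_inv, xpow_zero_smul_one],
    by rw [M.inv_val, xpow_zero_smul_one]⟩
  left_inv p := Subtype.ext rfl
  right_inv M := Units.ext rfl

def uFull (S : Type u) [CommRing S] :
    glPairFunctor r 0 S ≃ Matrix.GeneralLinearGroup (Fin r) (PowerSeries S) :=
  (E1 r 0 S).symm.trans (uAux S)

lemma uFull_natural (f : S →+* S') (p : glPairFunctor r 0 S) :
    (((uFull S').symm (Units.map
        ((RingHom.mapMatrix (PowerSeries.map f)).toMonoidHom)
        (uFull S p))).1.1 = p.1.1.map (fun x => HahnSeries.map x f)) ∧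
    (((uFull S').symm (Units.map
        ((RingHom.mapMatrix (PowerSeries.map f)).toMonoidHom)
        (uFull S p))).1.2 = p.1.2.map (fun x => HahnSeries.map x f)) := by
  obtain ⟨q, rfl⟩ : ∃ q, E1 r 0 S q = p := ⟨(E1 r 0 S).symm p, (E1 r 0 S).apply_symm_apply p⟩
  have hq : (uFull S').symm (Units.map ((RingHom.mapMatrix (PowerSeries.map f)).toMonoidHom)
      (uFull S (E1 r 0 S q))) =
      E1 r 0 S' ((uAux S').symm (Units.map ((RingHom.mapMatrix (PowerSeries.map f)).toMonoidHom)
        (uAux S q))) := by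
    simp only [uFull, Equiv.symm_trans_apply, Equiv.trans_apply, Equiv.symm_apply_apply,
      Equiv.symm_symm]
  rw [hq]
  constructor
  · show toLSmat 0 ((Units.map ((RingHom.mapMatrix (PowerSeries.map f)).toMonoidHom)
      (uAux S q)).val) = (E1 r 0 S q).1.1.map (fun x => HahnSeries.map x f)
    rw [E1_fst]
    show toLSmat 0 (q.1.1.map (PowerSeries.map f)) = _
    rw [toLSmat_map]
  · show toLSmat 0 ((Units.map ((RingHom.mapMatrix (PowerSeries.map f)).toMonoidHom)
      (uAux S q)).inv) = (E1 r 0 S q).1.2.map (fun x => HahnSeries.map x f)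
    rw [E1_snd]
    show toLSmat 0 (q.1.2.map (PowerSeries.map f)) = _
    rw [toLSmat_map]

end GLpart
/-- for a field `k`, `r ≥ 1` and `N ≥ 0`:
(a) the functor `R ↦ { (A,B) : A, B ∈ M_r(R((t))), AB = BA = 1, entries in t^{-N}R[[t]] }`
is corepresentable by a commutative `k`-algebra (naturally in `R`, with functoriality given
by the coefficientwise action on Laurent series);
(b) for `N = 0` this functor is naturally isomorphic to `R ↦ GL_r(R[[t]])`;
(c) in particular, the functor `R ↦ GL_r(R[[t]])` is corepresentable by a commutative
`k`-algebra. -/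
theorem glPairFunctor_corepresentable (k : Type u) [Field k] (r N : ℕ) (hr : 1 ≤ r) :
    (∃ (A : Type u) (_ : CommRing A) (_ : Algebra k A),
      ∃ e : (R : Type u) → [inst : CommRing R] → [inst' : Algebra k R] →
          ((A →ₐ[k] R) ≃ glPairFunctor r N R),
        ∀ (R R' : Type u) [CommRing R] [Algebra k R] [CommRing R'] [Algebra k R']
          (f : R →ₐ[k] R') (g : A →ₐ[k] R),
            ((e R' (f.comp g)).1.1 =
              (e R g).1.1.map (fun x => HahnSeries.map x f.toRingHom)) ∧
            ((e R' (f.comp g)).1.2 =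
              (e R g).1.2.map (fun x => HahnSeries.map x f.toRingHom))) ∧
    (∃ u : (R : Type u) → [inst : CommRing R] → [inst' : Algebra k R] →
          (glPairFunctor r 0 R ≃ Matrix.GeneralLinearGroup (Fin r) (PowerSeries R)),
        ∀ (R R' : Type u) [CommRing R] [Algebra k R] [CommRing R'] [Algebra k R']
          (f : R →ₐ[k] R') (p : glPairFunctor r 0 R),
            (((u R').symm (Units.map
                ((RingHom.mapMatrix (PowerSeries.map f.toRingHom)).toMonoidHom)
                (u R p))).1.1 =
              p.1.1.map (fun x => HahnSeries.map x f.toRingHom)) ∧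
            (((u R').symm (Units.map
                ((RingHom.mapMatrix (PowerSeries.map f.toRingHom)).toMonoidHom)
                (u R p))).1.2 =
              p.1.2.map (fun x => HahnSeries.map x f.toRingHom))) ∧
    (∃ (A : Type u) (_ : CommRing A) (_ : Algebra k A),
      ∃ e : (R : Type u) → [inst : CommRing R] → [inst' : Algebra k R] →
          ((A →ₐ[k] R) ≃ Matrix.GeneralLinearGroup (Fin r) (PowerSeries R)),
        ∀ (R R' : Type u) [CommRing R] [Algebra k R] [CommRing R'] [Algebra k R']
          (f : R →ₐ[k] R') (g : A →ₐ[k] R),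
            e R' (f.comp g) = Units.map
              ((RingHom.mapMatrix (PowerSeries.map f.toRingHom)).toMonoidHom)
              (e R g)) := by

  refine ⟨⟨Corep k r N, inferInstance, inferInstance, fun R _ _ => eFull k, ?_⟩,
    ⟨fun R _ _ => uFull R, ?_⟩,
    ⟨Corep k r 0, inferInstance, inferInstance,
      fun R _ _ => (eFull k).trans (uFull R), ?_⟩⟩
  · intro R R' _ _ _ _ f g
    exact eFull_natural k f g
  · intro R R' _ _ _ _ f p
    exact uFull_natural f.toRingHom p
  · intro R R' _ _ _ _ f g
    have h1 := eFull_natural (N := 0) k f g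
    have h2 := uFull_natural f.toRingHom (eFull k g)
    have h3 : eFull k (f.comp g) =
        (uFull R').symm (Units.map ((RingHom.mapMatrix
          (PowerSeries.map f.toRingHom)).toMonoidHom) (uFull R (eFull k g))) :=
      Subtype.ext (Prod.ext (h1.1.trans h2.1.symm) (h1.2.trans h2.2.symm))
    rw [Equiv.trans_apply, Equiv.trans_apply, h3, Equiv.apply_symm_apply]
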